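/- Let f : 𝕊ⁿ → ℝ be L₀-Lipschitz with respect to the Frobenius norm and let μ > 0. For X ∈ 𝕊ⁿ and U ∈ 𝕊ⁿ define the zeroth-order random oracle O_μ(X,U) := ((f(X + μU) − f(X))/μ) · U. Then for every X ∈ 𝕊ⁿ, E_{U∼𝔾ⁿ}[ ‖O_μ(X,U)‖_F² ] ≤ (1/4) · L₀² · (n⁴ + 2n³ + 5n² + 4n). -/

import Mathlib

open MeasureTheory ProbabilityTheory Matrix

noncomputable section

instance matrixMeasurableSpace (n : ℕ) : MeasurableSpace (Matrix (Fin n) (Fin n) ℝ) :=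
  inferInstanceAs (MeasurableSpace (Fin n → Fin n → ℝ))

/-- Auxiliary product of independent Gaussians: variance `1` at diagonal positions,
variance `1/2` at off-diagonal positions. -/
def gaussAux (n : ℕ) : Measure (Fin n → Fin n → ℝ) :=
  Measure.pi fun i => Measure.pi fun j => gaussianReal 0 (if i = j then 1 else 2⁻¹)

/-- The Gaussian orthogonal ensemble `𝔾ⁿ`: the law of the random symmetric matrix whose
entry `(i,j)` with `i ≤ j` is the independent Gaussian `g i j` (so `U_ii ~ N(0,1)`,
`U_ij = U_ji ~ N(0,1/2)` for `i < j`). -/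
def goe (n : ℕ) : Measure (Matrix (Fin n) (Fin n) ℝ) :=
  (gaussAux n).map fun g => Matrix.of fun i j => if i ≤ j then g i j else g j i

/-- The Frobenius norm `‖M‖_F = sqrt (trace (Mᵀ * M))`. -/
def frob {n : ℕ} (M : Matrix (Fin n) (Fin n) ℝ) : ℝ :=
  Real.sqrt (Matrix.trace (Mᵀ * M))


section Helpers
open Real Set
open scoped NNReal ENNReal
set_option maxHeartbeats 1000000


lemma integral_pi_prod {ι : Type*} [Fintype ι] {E : ι → Type*} [∀ i, MeasurableSpace (E i)]
    (μ : ∀ i, Measure (E i)) [∀ i, SigmaFinite (μ i)] (f : ∀ i, E i → ℝ) :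
    ∫ x, ∏ i, f i (x i) ∂Measure.pi μ = ∏ i, ∫ x, f i x ∂(μ i) := by
  letI : ∀ i, MeasureSpace (E i) := fun i => ⟨μ i⟩
  exact MeasureTheory.integral_fintype_prod_eq_prod f

lemma integrable_pi_prod {ι : Type*} [Fintype ι] {E : ι → Type*} [∀ i, MeasurableSpace (E i)]
    (μ : ∀ i, Measure (E i)) [∀ i, SigmaFinite (μ i)] {f : ∀ i, E i → ℝ}
    (hf : ∀ i, Integrable (f i) (μ i)) :
    Integrable (fun x => ∏ i, f i (x i)) (Measure.pi μ) := by
  letI : ∀ i, MeasureSpace (E i) := fun i => ⟨μ i⟩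
  exact MeasureTheory.Integrable.fintype_prod_dep hf


lemma integrable_pow_mul_exp {b : ℝ} (hb : 0 < b) (k : ℕ) :
    Integrable (fun x : ℝ => x ^ k * Real.exp (-b * x ^ 2)) := by
  have h := integrable_rpow_mul_exp_neg_mul_sq hb (s := (k : ℝ))
    (lt_of_lt_of_le neg_one_lt_zero (Nat.cast_nonneg k))
  refine h.congr (Filter.Eventually.of_forall fun x => ?_)
  simp [Real.rpow_natCast]

lemma J_eval {b : ℝ} (hb : 0 < b) (k : ℕ) (hk : Even k) :
    ∫ x : ℝ, x ^ k * Real.exp (-b * x ^ 2)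
      = b ^ (-((k : ℝ) + 1) / 2) * Real.Gamma (((k : ℝ) + 1) / 2) := by
  set f : ℝ → ℝ := fun x => x ^ k * Real.exp (-b * x ^ 2) with hf
  have hI : Integrable f := integrable_pow_mul_exp hb k
  have heven : ∀ x : ℝ, f (-x) = f x := by
    intro x; simp only [hf, hk.neg_pow, neg_sq]
  have hIoi : ∫ x in Ioi (0:ℝ), f x
      = b ^ (-((k : ℝ) + 1) / 2) * (1 / 2) * Real.Gamma (((k : ℝ) + 1) / 2) := by
    have h := integral_rpow_mul_exp_neg_mul_rpow (p := 2) (q := (k : ℝ)) two_pos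
      (lt_of_lt_of_le neg_one_lt_zero (Nat.cast_nonneg k)) hb
    rw [← h]
    refine setIntegral_congr_fun measurableSet_Ioi fun x hx => ?_
    rw [show ((2:ℝ)) = ((2:ℕ):ℝ) by norm_num, Real.rpow_natCast, Real.rpow_natCast]

  have hsplit : ∫ x, f x = (∫ x in Iic (0:ℝ), f x) + ∫ x in Ioi (0:ℝ), f x := by
    rw [← integral_add_compl measurableSet_Iic hI, compl_Iic]
  have hIic : ∫ x in Iic (0:ℝ), f x = ∫ x in Ioi (0:ℝ), f x := by
    have h2 : ∫ x in Iic (0:ℝ), f x = ∫ x in Iic (0:ℝ), f (-x) :=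
      setIntegral_congr_fun measurableSet_Iic fun x _ => (heven x).symm
    rw [h2, integral_comp_neg_Iic, neg_zero]
  rw [hsplit, hIic, hIoi]; ring


lemma gaussianPDF_eq_coe (v : ℝ≥0) :
    gaussianPDF 0 v = fun x => ((gaussianPDFReal 0 v x).toNNReal : ℝ≥0∞) := rfl

lemma integral_gaussianReal_eq (v : ℝ≥0) (hv : v ≠ 0) (φ : ℝ → ℝ) :
    ∫ x, φ x ∂(gaussianReal 0 v) = ∫ x, gaussianPDFReal 0 v x * φ x := by
  rw [gaussianReal_of_var_ne_zero _ hv, gaussianPDF_eq_coe,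
    integral_withDensity_eq_integral_smul
      ((measurable_gaussianPDFReal 0 v).real_toNNReal) φ]
  congr 1; funext x
  rw [NNReal.smul_def, smul_eq_mul, Real.coe_toNNReal _ (gaussianPDFReal_nonneg 0 v x)]

lemma integrable_pow_gauss (v : ℝ≥0) (k : ℕ) :
    Integrable (fun x : ℝ => x ^ k) (gaussianReal 0 v) := by
  by_cases hv : v = 0
  · subst hv
    rw [gaussianReal_zero_var]
    exact (integrable_const ((0:ℝ) ^ k)).congr (MeasureTheory.ae_eq_dirac (fun x : ℝ => x ^ k)).symm
  · have hvpos : (0:ℝ) < (v:ℝ) := by positivity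
    have hb : (0:ℝ) < (2 * (v:ℝ))⁻¹ := by positivity
    rw [gaussianReal_of_var_ne_zero _ hv]
    rw [integrable_withDensity_iff (measurable_gaussianPDF 0 v)
      (Filter.Eventually.of_forall fun x => ENNReal.ofReal_lt_top)]
    have := (integrable_pow_mul_exp hb k).const_mul (√(2 * π * (v:ℝ)))⁻¹
    refine this.congr (Filter.Eventually.of_forall fun x => ?_)
    have h1 : (gaussianPDF 0 v x).toReal = gaussianPDFReal 0 v x :=
      ENNReal.toReal_ofReal (gaussianPDFReal_nonneg 0 v x)
    simp only []
    rw [h1, gaussianPDFReal_def]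
    show _ = x ^ k * ((√(2 * π * (v:ℝ)))⁻¹ * Real.exp (-(x - 0) ^ 2 / (2 * (v:ℝ))))
    rw [show -(x - 0) ^ 2 / (2 * (v:ℝ)) = -(2 * (v:ℝ))⁻¹ * x ^ 2 by ring]
    ring

lemma integral_pow_gauss_ne (v : ℝ≥0) (hv : v ≠ 0) (k : ℕ) (hk : Even k) :
    ∫ x, x ^ k ∂(gaussianReal 0 v)
      = (√(2 * π * (v:ℝ)))⁻¹ *
        (((2 * (v:ℝ))⁻¹) ^ (-((k:ℝ)+1)/2) * Real.Gamma (((k:ℝ)+1)/2)) := by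
  have hvpos : (0:ℝ) < (v:ℝ) := by positivity
  have hb : (0:ℝ) < (2 * (v:ℝ))⁻¹ := by positivity
  rw [integral_gaussianReal_eq v hv]
  have heq : (fun x : ℝ => gaussianPDFReal 0 v x * x ^ k)
      = fun x => (√(2 * π * (v:ℝ)))⁻¹ * (x ^ k * Real.exp (-(2 * (v:ℝ))⁻¹ * x ^ 2)) := by
    funext x
    rw [gaussianPDFReal_def]
    show (√(2 * π * (v:ℝ)))⁻¹ * Real.exp (-(x - 0) ^ 2 / (2 * (v:ℝ))) * x ^ k = _
    rw [show -(x - 0) ^ 2 / (2 * (v:ℝ)) = -(2 * (v:ℝ))⁻¹ * x ^ 2 by ring]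
    ring
  rw [heq, integral_const_mul, J_eval hb k hk]

-- algebra helpers
lemma inv_rpow_neg {s : ℝ} (hs : 0 < s) (a : ℝ) : (s⁻¹) ^ (-a) = s ^ a := by
  rw [Real.inv_rpow hs.le, Real.rpow_neg hs.le, inv_inv]

lemma Gamma_three_half : Real.Gamma (3/2) = √π / 2 := by
  rw [show (3:ℝ)/2 = 1/2 + 1 by norm_num, Real.Gamma_add_one (by norm_num),
    Real.Gamma_one_half_eq]
  ring

lemma Gamma_five_half : Real.Gamma (5/2) = 3 * √π / 4 := by
  rw [show (5:ℝ)/2 = 3/2 + 1 by norm_num, Real.Gamma_add_one (by norm_num), Gamma_three_half]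
  ring

lemma gauss_moment_zero (v : ℝ≥0) : ∫ x : ℝ, x ^ 0 ∂(gaussianReal 0 v) = 1 := by
  simp

lemma gauss_moment_two (v : ℝ≥0) : ∫ x : ℝ, x ^ 2 ∂(gaussianReal 0 v) = (v:ℝ) := by
  by_cases hv : v = 0
  · subst hv; rw [gaussianReal_zero_var, integral_dirac]; norm_num
  · have hvpos : (0:ℝ) < (v:ℝ) := by positivity
    have hs : (0:ℝ) < 2 * (v:ℝ) := by positivity
    rw [integral_pow_gauss_ne v hv 2 (by decide)]
    rw [show -(((2:ℕ):ℝ)+1)/2 = -((3:ℝ)/2) by norm_num, inv_rpow_neg hs,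
      show ((((2:ℕ):ℝ))+1)/2 = (3:ℝ)/2 by norm_num, Gamma_three_half,
      show (3:ℝ)/2 = 1 + 1/2 by norm_num, Real.rpow_add hs, Real.rpow_one,
      ← Real.sqrt_eq_rpow, show 2 * π * (v:ℝ) = π * (2 * (v:ℝ)) by ring,
      Real.sqrt_mul pi_pos.le]
    have h1 : √π ≠ 0 := by positivity
    have h2 : √(2 * (v:ℝ)) ≠ 0 := by positivity
    field_simp

lemma gauss_moment_four (v : ℝ≥0) : ∫ x : ℝ, x ^ 4 ∂(gaussianReal 0 v) = 3 * (v:ℝ)^2 := by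
  by_cases hv : v = 0
  · subst hv; rw [gaussianReal_zero_var, integral_dirac]; norm_num
  · have hvpos : (0:ℝ) < (v:ℝ) := by positivity
    have hs : (0:ℝ) < 2 * (v:ℝ) := by positivity
    rw [integral_pow_gauss_ne v hv 4 (by decide)]
    rw [show -(((4:ℕ):ℝ)+1)/2 = -((5:ℝ)/2) by norm_num, inv_rpow_neg hs,
      show ((((4:ℕ):ℝ))+1)/2 = (5:ℝ)/2 by norm_num, Gamma_five_half,
      show (5:ℝ)/2 = 1 + (1 + 1/2) by norm_num, Real.rpow_add hs, Real.rpow_one,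
      Real.rpow_add hs, Real.rpow_one, ← Real.sqrt_eq_rpow, show 2 * π * (v:ℝ) = π * (2 * (v:ℝ)) by ring,
      Real.sqrt_mul pi_pos.le]
    have h1 : √π ≠ 0 := by positivity
    have h2 : √(2 * (v:ℝ)) ≠ 0 := by positivity
    have h3 : √(2 * (v:ℝ)) * √(2 * (v:ℝ)) = 2 * (v:ℝ) := Real.mul_self_sqrt hs.le
    field_simp
    nlinarith [h3, sq_nonneg ((v:ℝ))]

lemma integral_monomial (n : ℕ) (m : Fin n × Fin n → ℕ) :
    ∫ g, ∏ i, ∏ j, (g i j) ^ (m (i, j)) ∂gaussAux n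
      = ∏ i, ∏ j, ∫ x : ℝ, x ^ (m (i, j)) ∂gaussianReal 0 (if i = j then 1 else 2⁻¹) := by
  rw [gaussAux,
    integral_pi_prod (fun i => Measure.pi fun j => gaussianReal 0 (if i = j then 1 else 2⁻¹))
      (fun i h => ∏ j, (h j) ^ (m (i, j)))]
  exact Finset.prod_congr rfl fun i _ =>
    integral_pi_prod (fun j => gaussianReal 0 (if i = j then 1 else 2⁻¹))
      (fun j x => x ^ (m (i, j)))

lemma integrable_monomial (n : ℕ) (m : Fin n × Fin n → ℕ) :
    Integrable (fun g => ∏ i, ∏ j, (g i j) ^ (m (i, j))) (gaussAux n) := by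
  rw [gaussAux]
  have H := integrable_pi_prod
    (fun i => Measure.pi fun j => gaussianReal 0 (if i = j then 1 else 2⁻¹))
    (f := fun i h => ∏ j, (h j) ^ (m (i, j)))
    (fun i => integrable_pi_prod (fun j => gaussianReal 0 (if i = j then 1 else 2⁻¹))
      (f := fun j x => x ^ (m (i, j)))
      (fun j => integrable_pow_gauss _ _))
  exact H

lemma frob_sq {n : ℕ} (M : Matrix (Fin n) (Fin n) ℝ) :
    frob M ^ 2 = ∑ i, ∑ j, (M i j) ^ 2 := by
  have htr : Matrix.trace (Mᵀ * M) = ∑ i, ∑ j, (M i j) ^ 2 := by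
    rw [Matrix.trace]
    simp_rw [Matrix.diag, Matrix.mul_apply, Matrix.transpose_apply, ← sq]
    rw [Finset.sum_comm]
  rw [frob, htr, Real.sq_sqrt]
  positivity

lemma frob_nonneg {n : ℕ} (M : Matrix (Fin n) (Fin n) ℝ) : 0 ≤ frob M :=
  Real.sqrt_nonneg _

lemma frob_smul_sq {n : ℕ} (c : ℝ) (M : Matrix (Fin n) (Fin n) ℝ) :
    frob (c • M) ^ 2 = c ^ 2 * frob M ^ 2 := by
  rw [frob_sq, frob_sq, Finset.mul_sum]
  refine Finset.sum_congr rfl fun i _ => ?_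
  rw [Finset.mul_sum]
  refine Finset.sum_congr rfl fun j _ => ?_
  rw [Matrix.smul_apply, smul_eq_mul]
  ring

lemma monomial_decomp {n : ℕ} (g : Fin n → Fin n → ℝ) (p q : Fin n × Fin n) :
    (g p.1 p.2) ^ 2 * (g q.1 q.2) ^ 2
      = ∏ i, ∏ j, (g i j) ^ ((if p = (i, j) then 2 else 0) + (if q = (i, j) then 2 else 0)) := by
  simp_rw [pow_add, Finset.prod_mul_distrib]
  have h : ∀ r : Fin n × Fin n,
      (∏ i, ∏ j, (g i j) ^ (if r = (i, j) then 2 else 0)) = (g r.1 r.2) ^ 2 := by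
    intro r
    rw [← Fintype.prod_prod_type (f := fun s : Fin n × Fin n => (g s.1 s.2) ^ (if r = s then 2 else 0))]
    have : ∀ s : Fin n × Fin n, (g s.1 s.2) ^ (if r = s then 2 else 0)
        = if r = s then (g s.1 s.2) ^ 2 else 1 := by
      intro s; split <;> simp
    simp_rw [this]
    rw [Finset.prod_ite_eq, if_pos (Finset.mem_univ r)]
  rw [h p, h q]

def sig {n : ℕ} (r : Fin n × Fin n) : ℝ := if r.1 = r.2 then 1 else 2⁻¹

lemma coe_var {n : ℕ} (i j : Fin n) :
    (((if i = j then 1 else 2⁻¹ : ℝ≥0)) : ℝ) = sig (i, j) := by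
  rw [sig]; split <;> simp

lemma term_eval {n : ℕ} (p q : Fin n × Fin n) :
    ∫ g, (g p.1 p.2) ^ 2 * (g q.1 q.2) ^ 2 ∂gaussAux n
      = if p = q then 3 * sig p ^ 2 else sig p * sig q := by
  have hm := integral_monomial n (fun r => (if p = r then 2 else 0) + (if q = r then 2 else 0))
  have step1 : ∫ g, (g p.1 p.2) ^ 2 * (g q.1 q.2) ^ 2 ∂gaussAux n
      = ∏ i, ∏ j, ∫ x : ℝ, x ^ ((if p = (i, j) then 2 else 0) + (if q = (i, j) then 2 else 0))
          ∂gaussianReal 0 (if i = j then 1 else 2⁻¹) :=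
    (integral_congr_ae (Filter.Eventually.of_forall fun g => monomial_decomp g p q)).trans hm
  rw [step1, ← Fintype.prod_prod_type
    (f := fun r : Fin n × Fin n =>
      ∫ x : ℝ, x ^ ((if p = r then 2 else 0) + (if q = r then 2 else 0))
        ∂gaussianReal 0 (if r.1 = r.2 then 1 else 2⁻¹))]
  by_cases hpq : p = q
  · subst hpq
    rw [if_pos rfl]
    have h1 : ∀ r : Fin n × Fin n,
        (∫ x : ℝ, x ^ ((if p = r then 2 else 0) + (if p = r then 2 else 0))
          ∂gaussianReal 0 (if r.1 = r.2 then 1 else 2⁻¹))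
        = if p = r then 3 * sig r ^ 2 else 1 := by
      intro r
      by_cases h : p = r
      · rw [if_pos h, if_pos h]
        rw [show (2 + 2 : ℕ) = 4 from rfl, gauss_moment_four, coe_var r.1 r.2]
      · rw [if_neg h, if_neg h]
        exact gauss_moment_zero _
    simp_rw [h1]
    rw [Finset.prod_ite_eq, if_pos (Finset.mem_univ p)]
  · rw [if_neg hpq]
    have h1 : ∀ r : Fin n × Fin n,
        (∫ x : ℝ, x ^ ((if p = r then 2 else 0) + (if q = r then 2 else 0))
          ∂gaussianReal 0 (if r.1 = r.2 then 1 else 2⁻¹))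
        = (if p = r then sig r else 1) * (if q = r then sig r else 1) := by
      intro r
      by_cases h : p = r
      · have h' : ¬ q = r := fun hq => hpq (h.trans hq.symm)
        rw [if_pos h, if_neg h', if_pos h, if_neg h', mul_one]
        rw [show (2 + 0 : ℕ) = 2 from rfl, gauss_moment_two, coe_var r.1 r.2]
      · by_cases h' : q = r
        · rw [if_neg h, if_pos h', if_neg h, if_pos h', one_mul]
          rw [show (0 + 2 : ℕ) = 2 from rfl, gauss_moment_two, coe_var r.1 r.2]
        · rw [if_neg h, if_neg h', if_neg h, if_neg h', one_mul]
          exact gauss_moment_zero _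
    simp_rw [h1]
    rw [Finset.prod_mul_distrib, Finset.prod_ite_eq, Finset.prod_ite_eq,
      if_pos (Finset.mem_univ p), if_pos (Finset.mem_univ q)]

def cc {n : ℕ} (r : Fin n × Fin n) : ℝ :=
  if r.1 = r.2 then 1 else if r.1 < r.2 then 2 else 0

lemma term_combine {n : ℕ} (p q : Fin n × Fin n) :
    cc p * cc q * (if p = q then 3 * sig p ^ 2 else sig p * sig q)
      = (cc p * sig p) * (cc q * sig q) + (if p = q then 2 * (cc p * sig p) else 0) := by
  by_cases h : p = q
  · subst h
    rw [if_pos rfl, if_pos rfl, cc, sig]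
    rcases lt_trichotomy p.1 p.2 with h1 | h1 | h1
    · rw [if_neg h1.ne, if_neg h1.ne, if_pos h1]; norm_num
    · rw [if_pos h1, if_pos h1]; norm_num
    · rw [if_neg h1.ne', if_neg h1.ne', if_neg (not_lt.mpr h1.le)]; norm_num
  · rw [if_neg h, if_neg h, add_zero]; ring

lemma sum_A (n : ℕ) :
    ∑ r : Fin n × Fin n, cc r * sig r = ((n:ℝ)^2 + n)/2 := by
  have hA : ∀ r : Fin n × Fin n, cc r * sig r
      = if r.1 = r.2 then (1:ℝ) else if r.1 < r.2 then 1 else 0 := by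
    intro r; rw [cc, sig]
    rcases lt_trichotomy r.1 r.2 with h1 | h1 | h1
    · rw [if_neg h1.ne, if_neg h1.ne, if_neg h1.ne, if_pos h1, if_pos h1]; norm_num
    · rw [if_pos h1, if_pos h1, if_pos h1]; norm_num
    · rw [if_neg h1.ne', if_neg h1.ne', if_neg h1.ne', if_neg (not_lt.mpr h1.le),
        if_neg (not_lt.mpr h1.le)]; norm_num
  simp_rw [hA]
  set E : Fin n → Fin n → ℝ := fun i j => if i = j then (1:ℝ) else if i < j then 1 else 0 with hE
  have hsum : ∑ r : Fin n × Fin n, E r.1 r.2 = ∑ i, ∑ j, E i j := Fintype.sum_prod_type _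
  have hswap : ∑ i, ∑ j, E i j = ∑ i, ∑ j, E j i := Finset.sum_comm
  have hdouble : (∑ i, ∑ j, E i j) + (∑ i, ∑ j, E i j)
      = ∑ i : Fin n, ∑ j : Fin n, ((1:ℝ) + if i = j then 1 else 0) := by
    nth_rewrite 2 [hswap]
    rw [← Finset.sum_add_distrib]
    refine Finset.sum_congr rfl fun i _ => ?_
    rw [← Finset.sum_add_distrib]
    refine Finset.sum_congr rfl fun j _ => ?_
    simp only [hE]
    beta_reduce
    rcases lt_trichotomy i j with h1 | h1 | h1
    · simp [h1.ne, h1.ne', h1, not_lt.mpr h1.le]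
    · simp [h1]
    · simp [h1.ne, h1.ne', h1, not_lt.mpr h1.le]
  have hval : ∑ i : Fin n, ∑ j : Fin n, ((1:ℝ) + if i = j then 1 else 0) = n^2 + n := by
    have : ∀ i : Fin n, ∑ j : Fin n, ((1:ℝ) + if i = j then 1 else 0) = n + 1 := by
      intro i
      rw [Finset.sum_add_distrib, Finset.sum_const, Finset.sum_ite_eq,
        if_pos (Finset.mem_univ i)]
      simp
    simp_rw [this]
    rw [Finset.sum_const]
    simp; ring
  have : ∑ r : Fin n × Fin n, E r.1 r.2 = ((n:ℝ)^2 + n)/2 := by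
    rw [hsum]; linarith [hdouble, hval, hswap]
  exact this

lemma integrable_term {n : ℕ} (p q : Fin n × Fin n) :
    Integrable (fun g => (g p.1 p.2) ^ 2 * (g q.1 q.2) ^ 2) (gaussAux n) :=
  (integrable_monomial n
    (fun r => (if p = r then 2 else 0) + (if q = r then 2 else 0))).congr
    (Filter.Eventually.of_forall fun g => (monomial_decomp g p q).symm)

lemma integral_sq_sum (n : ℕ) :
    ∫ g, (∑ r : Fin n × Fin n, cc r * (g r.1 r.2) ^ 2) ^ 2 ∂gaussAux n
      = ((n:ℝ)^4 + 2*(n:ℝ)^3 + 5*(n:ℝ)^2 + 4*(n:ℝ)) / 4 := by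
  have expand : ∀ g : Fin n → Fin n → ℝ,
      (∑ r : Fin n × Fin n, cc r * (g r.1 r.2) ^ 2) ^ 2
        = ∑ p : Fin n × Fin n, ∑ q : Fin n × Fin n,
            (cc p * cc q) * ((g p.1 p.2) ^ 2 * (g q.1 q.2) ^ 2) := by
    intro g
    rw [sq, Finset.sum_mul_sum]
    exact Finset.sum_congr rfl fun p _ => Finset.sum_congr rfl fun q _ => by ring
  have step1 : ∫ g, (∑ r : Fin n × Fin n, cc r * (g r.1 r.2) ^ 2) ^ 2 ∂gaussAux n
      = ∑ p : Fin n × Fin n, ∑ q : Fin n × Fin n,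
          (cc p * cc q) * ∫ g, (g p.1 p.2) ^ 2 * (g q.1 q.2) ^ 2 ∂gaussAux n := by
    rw [integral_congr_ae (Filter.Eventually.of_forall expand)]
    rw [integral_finset_sum _ (fun p _ =>
      integrable_finset_sum _ (fun q _ => (integrable_term p q).const_mul _))]
    refine Finset.sum_congr rfl fun p _ => ?_
    rw [integral_finset_sum _ (fun q _ => (integrable_term p q).const_mul _)]
    exact Finset.sum_congr rfl fun q _ => integral_const_mul _ _
  rw [step1]
  have step2 : ∑ p : Fin n × Fin n, ∑ q : Fin n × Fin n,
      (cc p * cc q) * ∫ g, (g p.1 p.2) ^ 2 * (g q.1 q.2) ^ 2 ∂gaussAux n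
      = ∑ p : Fin n × Fin n, ∑ q : Fin n × Fin n,
        ((cc p * sig p) * (cc q * sig q) + (if p = q then 2 * (cc p * sig p) else 0)) := by
    refine Finset.sum_congr rfl fun p _ => Finset.sum_congr rfl fun q _ => ?_
    rw [term_eval p q, term_combine p q]
  rw [step2]
  have step3 : ∑ p : Fin n × Fin n, ∑ q : Fin n × Fin n,
      ((cc p * sig p) * (cc q * sig q) + (if p = q then 2 * (cc p * sig p) else 0))
      = (∑ p : Fin n × Fin n, cc p * sig p) * (∑ q : Fin n × Fin n, cc q * sig q)
        + 2 * ∑ p : Fin n × Fin n, cc p * sig p := by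
    have inner : ∀ p : Fin n × Fin n, (∑ q : Fin n × Fin n,
        ((cc p * sig p) * (cc q * sig q) + (if p = q then 2 * (cc p * sig p) else 0)))
        = (cc p * sig p) * (∑ q : Fin n × Fin n, cc q * sig q) + 2 * (cc p * sig p) := by
      intro p
      rw [Finset.sum_add_distrib, ← Finset.mul_sum, Finset.sum_ite_eq,
        if_pos (Finset.mem_univ p)]
    simp_rw [inner]
    rw [Finset.sum_add_distrib, ← Finset.sum_mul, ← Finset.mul_sum]
  rw [step3, sum_A]
  ring

lemma frob_T_sq {n : ℕ} (g : Fin n → Fin n → ℝ) :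
    frob (Matrix.of fun i j => if i ≤ j then g i j else g j i) ^ 2
      = ∑ r : Fin n × Fin n, cc r * (g r.1 r.2) ^ 2 := by
  rw [frob_sq]
  have hent : ∀ i j : Fin n,
      ((Matrix.of fun i j => if i ≤ j then g i j else g j i) i j) ^ 2
        = (if i ≤ j then (g i j) ^ 2 else 0) + (if i ≤ j then 0 else (g j i) ^ 2) := by
    intro i j; rw [Matrix.of_apply]; split <;> simp
  simp_rw [hent, Finset.sum_add_distrib]
  have hswap : (∑ i : Fin n, ∑ j : Fin n, if i ≤ j then (0:ℝ) else (g j i) ^ 2)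
      = ∑ i : Fin n, ∑ j : Fin n, if j ≤ i then (0:ℝ) else (g i j) ^ 2 := Finset.sum_comm
  rw [hswap, ← Finset.sum_add_distrib]
  simp_rw [← Finset.sum_add_distrib]
  rw [Fintype.sum_prod_type
    (f := fun r : Fin n × Fin n => cc r * (g r.1 r.2) ^ 2)]
  refine Finset.sum_congr rfl fun i _ => Finset.sum_congr rfl fun j _ => ?_
  rw [cc]
  rcases lt_trichotomy i j with h1 | h1 | h1
  · rw [if_pos h1.le, if_neg (not_le.mpr h1), if_neg h1.ne, if_pos h1]; ring
  · subst h1; rw [if_pos le_rfl, if_pos le_rfl, if_pos rfl]; ring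
  · rw [if_neg (not_le.mpr h1), if_pos h1.le, if_neg h1.ne', if_neg (not_lt.mpr h1.le)]; ring

lemma measurable_entry {n : ℕ} (i j : Fin n) :
    Measurable (fun g : Fin n → Fin n → ℝ => g i j) :=
  (measurable_pi_apply j).comp (measurable_pi_apply i)

lemma measurable_frob {n : ℕ} : Measurable (frob : Matrix (Fin n) (Fin n) ℝ → ℝ) := by
  have h : (frob : Matrix (Fin n) (Fin n) ℝ → ℝ)
      = fun M => Real.sqrt (∑ i, ∑ j, (M i j) ^ 2) := by
    funext M
    rw [← frob_sq, Real.sqrt_sq (frob_nonneg M)]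
  rw [h]
  exact Measurable.sqrt <| Finset.measurable_sum _ fun i _ =>
    Finset.measurable_sum _ fun j _ => (measurable_entry i j).pow_const 2

lemma measurable_T {n : ℕ} :
    Measurable (fun g : Fin n → Fin n → ℝ =>
      Matrix.of fun i j => if i ≤ j then g i j else g j i) := by
  apply measurable_pi_lambda
  intro i
  apply measurable_pi_lambda
  intro j
  by_cases h : i ≤ j
  · simp only [Matrix.of_apply, if_pos h]; exact measurable_entry i j
  · simp only [Matrix.of_apply, if_neg h]; exact measurable_entry j i

lemma T_isSymm {n : ℕ} (g : Fin n → Fin n → ℝ) :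
    (Matrix.of fun i j => if i ≤ j then g i j else g j i).IsSymm := by
  apply Matrix.IsSymm.ext
  intro i j
  rw [Matrix.of_apply, Matrix.of_apply]
  rcases lt_trichotomy i j with h1 | h1 | h1
  · rw [if_neg (not_le.mpr h1), if_pos h1.le]
  · subst h1; rfl
  · rw [if_pos h1.le, if_neg (not_le.mpr h1)]

lemma goe_ae_symm (n : ℕ) : ∀ᵐ U ∂goe n, U.IsSymm := by
  have hs : MeasurableSet {U : Matrix (Fin n) (Fin n) ℝ | U.IsSymm} := by
    have : {U : Matrix (Fin n) (Fin n) ℝ | U.IsSymm}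
        = ⋂ r : Fin n × Fin n, {U : Matrix (Fin n) (Fin n) ℝ | U r.2 r.1 = U r.1 r.2} := by
      ext U
      simp only [Set.mem_setOf_eq, Set.mem_iInter]
      constructor
      · intro h r; exact (Matrix.IsSymm.apply h r.1 r.2)
      · intro h; exact Matrix.IsSymm.ext fun i j => h (i, j)
    rw [this]
    exact MeasurableSet.iInter fun r =>
      measurableSet_eq_fun (measurable_entry r.2 r.1) (measurable_entry r.1 r.2)
  rw [goe, MeasureTheory.ae_map_iff measurable_T.aemeasurable hs]
  exact Filter.Eventually.of_forall fun g => T_isSymm g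

lemma goe_frob_four (n : ℕ) :
    ∫ U, frob U ^ 4 ∂goe n
      = ((n:ℝ)^4 + 2*(n:ℝ)^3 + 5*(n:ℝ)^2 + 4*(n:ℝ)) / 4 := by
  rw [goe, integral_map measurable_T.aemeasurable
    ((measurable_frob.pow_const 4).aestronglyMeasurable)]
  have : ∀ g : Fin n → Fin n → ℝ,
      frob (Matrix.of fun i j => if i ≤ j then g i j else g j i) ^ 4
        = (∑ r : Fin n × Fin n, cc r * (g r.1 r.2) ^ 2) ^ 2 := by
    intro g
    rw [show (4:ℕ) = 2*2 from rfl, pow_mul, frob_T_sq]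
  rw [integral_congr_ae (Filter.Eventually.of_forall this), integral_sq_sum]

lemma integrable_sq_sum (n : ℕ) :
    Integrable (fun g : Fin n → Fin n → ℝ =>
      (∑ r : Fin n × Fin n, cc r * (g r.1 r.2) ^ 2) ^ 2) (gaussAux n) := by
  have expand : ∀ g : Fin n → Fin n → ℝ,
      (∑ r : Fin n × Fin n, cc r * (g r.1 r.2) ^ 2) ^ 2
        = ∑ p : Fin n × Fin n, ∑ q : Fin n × Fin n,
            (cc p * cc q) * ((g p.1 p.2) ^ 2 * (g q.1 q.2) ^ 2) := by
    intro g
    rw [sq, Finset.sum_mul_sum]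
    exact Finset.sum_congr rfl fun p _ => Finset.sum_congr rfl fun q _ => by ring
  refine (integrable_finset_sum _ fun p _ =>
    integrable_finset_sum _ fun q _ => (integrable_term p q).const_mul _).congr
    (Filter.Eventually.of_forall fun g => (expand g).symm)

lemma goe_integrable_bound (n : ℕ) (C : ℝ) :
    Integrable (fun U => C * frob U ^ 4) (goe n) := by
  rw [goe, integrable_map_measure
    (((measurable_frob.pow_const 4).const_mul C).aestronglyMeasurable)
    measurable_T.aemeasurable]
  have : ((fun U => C * frob U ^ 4) ∘ fun g : Fin n → Fin n → ℝ =>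
      Matrix.of fun i j => if i ≤ j then g i j else g j i)
      = fun g => C * (∑ r : Fin n × Fin n, cc r * (g r.1 r.2) ^ 2) ^ 2 := by
    funext g
    simp only [Function.comp_apply]
    rw [show (4:ℕ) = 2*2 from rfl, pow_mul, frob_T_sq]
  rw [this]
  exact (integrable_sq_sum n).const_mul C

end Helpers

set_option maxHeartbeats 1000000 in
/-- If `f : 𝕊ⁿ → ℝ` is `L₀`-Lipschitz w.r.t. the Frobenius norm and
`μ > 0`, then the zeroth-order oracle `O_μ(X,U) = ((f(X + μU) − f(X))/μ) • U` satisfies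
`E_{U∼𝔾ⁿ}[‖O_μ(X,U)‖_F²] ≤ (1/4) L₀² (n⁴ + 2n³ + 5n² + 4n)` for every symmetric `X`. -/
theorem oracle_second_moment (n : ℕ) (f : Matrix (Fin n) (Fin n) ℝ → ℝ) (L₀ : ℝ)
    (hlip : ∀ X Y : Matrix (Fin n) (Fin n) ℝ, X.IsSymm → Y.IsSymm →
      |f X - f Y| ≤ L₀ * frob (X - Y))
    (μ : ℝ) (hμ : 0 < μ)
    (X : Matrix (Fin n) (Fin n) ℝ) (hX : X.IsSymm) :
    ∫ U, frob (((f (X + μ • U) - f X) / μ) • U) ^ 2 ∂(goe n)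
      ≤ (1 / 4) * L₀ ^ 2 * ((n : ℝ) ^ 4 + 2 * (n : ℝ) ^ 3 + 5 * (n : ℝ) ^ 2 + 4 * (n : ℝ)) := by
  have hbb : Integrable (fun U => L₀ ^ 2 * frob U ^ 4) (goe n) := goe_integrable_bound n _
  have hle : ∀ᵐ U ∂goe n,
      frob (((f (X + μ • U) - f X) / μ) • U) ^ 2 ≤ L₀ ^ 2 * frob U ^ 4 := by
    refine (goe_ae_symm n).mono fun U hU => ?_
    set d : ℝ := f (X + μ • U) - f X with hd
    have hXU : (X + μ • U).IsSymm := hX.add (hU.smul μ)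
    have habs : |d| ≤ L₀ * frob (μ • U) := by
      have := hlip (X + μ • U) X hXU hX
      rwa [add_sub_cancel_left] at this
    have h2 : d ^ 2 ≤ L₀ ^ 2 * (μ ^ 2 * frob U ^ 2) := by
      have h3 := pow_le_pow_left₀ (abs_nonneg d) habs 2
      rw [sq_abs] at h3
      calc d ^ 2 ≤ (L₀ * frob (μ • U)) ^ 2 := h3
        _ = L₀ ^ 2 * frob (μ • U) ^ 2 := by ring
        _ = L₀ ^ 2 * (μ ^ 2 * frob U ^ 2) := by rw [frob_smul_sq]
    have hμ2 : (0:ℝ) < μ ^ 2 := by positivity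
    have h4 : (d / μ) ^ 2 ≤ L₀ ^ 2 * frob U ^ 2 := by
      rw [div_pow, div_le_iff₀ hμ2]
      calc d ^ 2 ≤ L₀ ^ 2 * (μ ^ 2 * frob U ^ 2) := h2
        _ = L₀ ^ 2 * frob U ^ 2 * μ ^ 2 := by ring
    calc frob ((d / μ) • U) ^ 2 = (d / μ) ^ 2 * frob U ^ 2 := frob_smul_sq _ _
      _ ≤ (L₀ ^ 2 * frob U ^ 2) * frob U ^ 2 :=
          mul_le_mul_of_nonneg_right h4 (by positivity)
      _ = L₀ ^ 2 * frob U ^ 4 := by ring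
  calc ∫ U, frob (((f (X + μ • U) - f X) / μ) • U) ^ 2 ∂goe n
      ≤ ∫ U, L₀ ^ 2 * frob U ^ 4 ∂goe n :=
        integral_mono_of_nonneg (Filter.Eventually.of_forall fun U => sq_nonneg _) hbb hle
    _ = L₀ ^ 2 * ∫ U, frob U ^ 4 ∂goe n := integral_const_mul _ _
    _ = L₀ ^ 2 * (((n:ℝ)^4 + 2*(n:ℝ)^3 + 5*(n:ℝ)^2 + 4*(n:ℝ)) / 4) := by
        rw [goe_frob_four]
    _ ≤ (1 / 4) * L₀ ^ 2 * ((n : ℝ) ^ 4 + 2 * (n : ℝ) ^ 3 + 5 * (n : ℝ) ^ 2 + 4 * (n : ℝ)) :=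
        le_of_eq (by ring)
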